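/- arXiv:1305.1071 — 4 statements merged into one kernel-verified Lean document; each statement's English description precedes it below -/
import Mathlib

section
/- Let E be a free group and F a normal subgroup of E. Then the quotient group E/[F,F] is torsion-free. -/
universe u

/-- The Mathlib (Dec 2024) definition, removed since: a monoid is torsion-free if no element
other than `1` has finite order. -/
def Monoid.IsTorsionFree (G : Type*) [Monoid G] : Prop :=
  ∀ g : G, g ≠ 1 → ¬IsOfFinOrder g

/-- The abelianization of a free group is torsion-free. -/
lemma freeGroup_pow_mem_commutator {G : Type*} [Group G] [IsFreeGroup G] {g : G} {n : ℕ}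
    (hn : n ≠ 0) (h : g ^ n ∈ commutator G) : g ∈ commutator G := by
  -- pass to the abelianization
  have h1 : (Abelianization.of g) ^ n = 1 := by
    rw [← map_pow]
    exact (QuotientGroup.eq_one_iff _).mpr h
  suffices hof : Abelianization.of g = 1 by
    exact (QuotientGroup.eq_one_iff g).mp hof
  -- transport to the abelianization of an honest `FreeGroup`
  set e := (IsFreeGroup.toFreeGroup G).abelianizationCongr
  have h2 : (e (Abelianization.of g)) ^ n = 1 := by
    rw [← map_pow, h1, map_one]
  suffices hb : e (Abelianization.of g) = 1 by
    have := congrArg e.symm hb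
    simpa using this
  -- view it inside the free abelian group, then the finsupp model
  set b : FreeAbelianGroup (IsFreeGroup.Generators G) :=
    Additive.ofMul (e (Abelianization.of g)) with hbdef
  have h3 : n • b = 0 := by
    have : Additive.ofMul ((e (Abelianization.of g)) ^ n) = n • b := rfl
    rw [← this, h2]; rfl
  have h4 : n • (FreeAbelianGroup.equivFinsupp _ b) = 0 := by
    rw [← map_nsmul, h3, map_zero]
  have h5 : (FreeAbelianGroup.equivFinsupp _ b) = 0 := by
    ext a
    have := congrArg (fun f => f a) h4
    simp only [Finsupp.smul_apply, Finsupp.coe_zero, Pi.zero_apply, smul_eq_mul,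
      nsmul_eq_mul] at this ⊢
    rcases mul_eq_zero.mp this with h | h
    · exact absurd (Nat.cast_eq_zero.mp h) hn
    · exact h
  have h6 : b = 0 := by
    apply (FreeAbelianGroup.equivFinsupp _).injective
    rw [h5, map_zero]
  have : Additive.toMul b = (1 : Abelianization (FreeGroup (IsFreeGroup.Generators G))) :=
    congrArg Additive.toMul h6
  simpa [hbdef] using this

/-- Membership in the commutator of a subgroup, seen externally vs internally. -/
lemma mem_commutator_subgroup_iff {E : Type*} [Group E] (F : Subgroup E) {x : E} (hx : x ∈ F) :
    x ∈ (⁅F, F⁆ : Subgroup E) ↔ (⟨x, hx⟩ : F) ∈ commutator F := by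
  have key : (⁅F, F⁆ : Subgroup E) = (commutator F).map F.subtype := by
    rw [commutator_def, Subgroup.map_commutator]
    rw [← MonoidHom.range_eq_map, Subgroup.range_subtype]
  rw [key]
  constructor
  · intro h
    have : F.subtype (⟨x, hx⟩ : F) ∈ (commutator F).map F.subtype := h
    exact (Subgroup.mem_map_iff_mem F.subtype_injective).mp this
  · intro h
    exact ⟨⟨x, hx⟩, h, rfl⟩

/-- Let `E` be a free group and `F` a normal subgroup of `E`. Then `E/[F,F]` is
torsion-free. -/
theorem free_quotient_commutator_torsionFree (E : Type u) [Group E] [IsFreeGroup E]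
    (F : Subgroup E) [F.Normal] :
    Monoid.IsTorsionFree (E ⧸ (⁅F, F⁆ : Subgroup E)) := by
  intro g hg hfin
  obtain ⟨n, hnpos, hgn⟩ := isOfFinOrder_iff_pow_eq_one.mp hfin
  obtain ⟨x, rfl⟩ := QuotientGroup.mk_surjective g
  have hxn : x ^ n ∈ (⁅F, F⁆ : Subgroup E) := by
    rw [← QuotientGroup.eq_one_iff]
    exact_mod_cast hgn
  apply hg
  rw [QuotientGroup.eq_one_iff]
  -- the subgroup generated by F and x
  set H : Subgroup E := F ⊔ Subgroup.zpowers x with hHdef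
  have hFH : F ≤ H := le_sup_left
  have hxH : x ∈ H := Subgroup.mem_sup_right (Subgroup.mem_zpowers x)
  have hcommFH : (⁅F, F⁆ : Subgroup E) ≤ ⁅H, H⁆ := Subgroup.commutator_mono hFH hFH
  -- H/F is cyclic, so [H,H] ≤ F
  have hHHF : (⁅H, H⁆ : Subgroup E) ≤ F := by
    have hmap : H.map (QuotientGroup.mk' F) ≤ Subgroup.zpowers (QuotientGroup.mk' F x) := by
      rw [hHdef, Subgroup.map_sup, QuotientGroup.map_mk'_self, bot_sup_eq,
        MonoidHom.map_zpowers]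
    have hbot : (⁅H, H⁆ : Subgroup E).map (QuotientGroup.mk' F) = ⊥ := by
      rw [Subgroup.map_commutator]
      rw [eq_bot_iff]
      refine le_trans (Subgroup.commutator_mono hmap hmap) ?_
      rw [← Subgroup.commutator_eq_bot_iff_le_centralizer.mpr]
      intro a ha
      rw [Subgroup.mem_zpowers_iff] at ha
      obtain ⟨k, rfl⟩ := ha
      rw [Subgroup.mem_centralizer_iff]
      intro b hb
      rw [SetLike.mem_coe, Subgroup.mem_zpowers_iff] at hb
      obtain ⟨j, rfl⟩ := hb
      exact (Commute.refl _).zpow_zpow j k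
    rwa [Subgroup.map_eq_bot_iff, QuotientGroup.ker_mk'] at hbot
  -- Step 1: x ∈ F, using that H is free (Nielsen–Schreier)
  have hxF : x ∈ F := by
    have hxnH : x ^ n ∈ (⁅H, H⁆ : Subgroup E) := hcommFH hxn
    have h1 : (⟨x, hxH⟩ : H) ^ n ∈ commutator H := by
      have heq : (⟨x, hxH⟩ : H) ^ n = ⟨x ^ n, pow_mem hxH n⟩ := by ext; simp
      rw [heq, ← mem_commutator_subgroup_iff H (pow_mem hxH n)]
      exact hxnH
    have h2 : (⟨x, hxH⟩ : H) ∈ commutator H :=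
      freeGroup_pow_mem_commutator hnpos.ne' h1
    have h3 : x ∈ (⁅H, H⁆ : Subgroup E) := (mem_commutator_subgroup_iff H hxH).mpr h2
    exact hHHF h3
  -- Step 2: x ∈ [F,F], using that F is free (Nielsen–Schreier)
  have h1 : (⟨x, hxF⟩ : F) ^ n ∈ commutator F := by
    have heq : (⟨x, hxF⟩ : F) ^ n = ⟨x ^ n, pow_mem hxF n⟩ := by ext; simp
    rw [heq, ← mem_commutator_subgroup_iff F (pow_mem hxF n)]
    exact hxn
  have h2 : (⟨x, hxF⟩ : F) ∈ commutator F :=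
    freeGroup_pow_mem_commutator hnpos.ne' h1
  exact (mem_commutator_subgroup_iff F hxF).mpr h2
end

section
/- If a group G has the factorization property and K is a finite index subgroup of G, then K has the factorization property. -/
universe u

/-- The class of elementary amenable groups: the smallest class of groups containing
all finite groups and all abelian groups, closed under subgroups, quotients,
extensions, and directed unions (and isomorphism). -/
inductive ElementaryAmenable : ∀ (G : Type u) [Group G], Prop
  | of_finite (G : Type u) [Group G] (h : Finite G) : ElementaryAmenable G
  | of_abelian (G : Type u) [Group G] (h : ∀ a b : G, a * b = b * a) : ElementaryAmenable G
  | of_subgroup (G : Type u) [Group G] (H : Subgroup G) (h : ElementaryAmenable G) :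
      ElementaryAmenable H
  | of_quotient (G : Type u) [Group G] (N : Subgroup G) [N.Normal] (h : ElementaryAmenable G) :
      ElementaryAmenable (G ⧸ N)
  | of_extension (G : Type u) [Group G] (N : Subgroup G) [N.Normal]
      (hN : ElementaryAmenable N) (hQ : ElementaryAmenable (G ⧸ N)) : ElementaryAmenable G
  | of_directedUnion (G : Type u) [Group G] (ι : Type u) (K : ι → Subgroup G)
      (hdir : Directed (· ≤ ·) K) (hsup : (⨆ i, K i) = ⊤)
      (h : ∀ i, ElementaryAmenable (K i)) : ElementaryAmenable G
  | of_mulEquiv (G H : Type u) [Group G] [Group H] (e : G ≃* H) (h : ElementaryAmenable G) :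
      ElementaryAmenable H

/-- A group `H` has the factorization property if every homomorphism from `H` to a
finite group factors through a torsion-free elementary amenable group. -/
def HasFactorizationProperty (H : Type u) [Group H] : Prop :=
  ∀ (P : GrpCat.{u}), Finite P → ∀ f : H →* P,
    ∃ (M : GrpCat.{u}) (g : H →* M) (h : (M : Type u) →* P),
      (∀ g : M, g ≠ 1 → ¬IsOfFinOrder g) ∧ ElementaryAmenable M ∧ h.comp g = f

/-- The factorization property passes to finite index subgroups. -/
theorem finiteIndex_subgroup_hasFactorizationProperty (G : Type u) [Group G]
    (hG : HasFactorizationProperty G) (K : Subgroup G) [K.FiniteIndex] :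
    HasFactorizationProperty K := by
  intro P _ f
  -- `L` is the image of `ker f` in `G`; it has finite index in `G`.
  set L : Subgroup G := f.ker.map K.subtype with hLdef
  have hLK : L ≤ K := by
    intro x hx; obtain ⟨y, -, rfl⟩ := Subgroup.mem_map.mp hx; exact y.2
  haveI : f.ker.FiniteIndex := by
    haveI : Finite f.range := Subgroup.instFiniteSubtypeMem f.range
    exact Subgroup.finiteIndex_ker f
  haveI : L.FiniteIndex := by
    constructor
    rw [← Subgroup.relIndex_mul_index hLK]
    have h1 : L.relIndex K = f.ker.index := by
      unfold Subgroup.relIndex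
      rw [hLdef, Subgroup.subgroupOf, Subgroup.comap_map_eq_self_of_injective K.subtype_injective]
    rw [h1]
    exact Nat.mul_ne_zero Subgroup.FiniteIndex.index_ne_zero Subgroup.FiniteIndex.index_ne_zero
  -- pass to the normal core `C`, which is normal of finite index in `G`.
  set C : Subgroup G := L.normalCore with hCdef
  haveI : C.Normal := Subgroup.normalCore_normal L
  haveI : C.FiniteIndex := Subgroup.finiteIndex_normalCore L
  haveI : Finite (G ⧸ C) := Subgroup.finite_quotient_of_finiteIndex
  -- apply the factorization property of `G` to `G → G ⧸ C`.
  obtain ⟨M, g, h, hTF, hEA, hfac⟩ := hG (GrpCat.of (G ⧸ C)) (by dsimp; infer_instance) (QuotientGroup.mk' C)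
  set φ : K →* M := g.comp K.subtype with hφdef
  have hker : φ.ker ≤ f.ker := by
    intro k hk
    have hgk : g (k : G) = 1 := hk
    have : (QuotientGroup.mk' C) (k : G) = 1 := by
      rw [← hfac]; simp [hgk]
    have hkC : (k : G) ∈ C := (QuotientGroup.eq_one_iff _).mp this
    have hkL : (k : G) ∈ L := Subgroup.normalCore_le L hkC
    obtain ⟨y, hy, hyk⟩ := Subgroup.mem_map.mp hkL
    have : y = k := K.subtype_injective hyk
    rwa [← this]
  refine ⟨GrpCat.of (↥K ⧸ φ.ker), QuotientGroup.mk' φ.ker, QuotientGroup.lift φ.ker f hker, ?_, ?_, ?_⟩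
  · -- torsion-free: `K ⧸ ker φ` embeds in `M`.
    intro x hx hfin
    set ι : (↥K ⧸ φ.ker) →* M :=
      φ.range.subtype.comp (QuotientGroup.quotientKerEquivRange φ).toMonoidHom with hιdef
    have hinj : Function.Injective ι :=
      φ.range.subtype_injective.comp (QuotientGroup.quotientKerEquivRange φ).injective
    have h1 : ι x ≠ 1 := by
      intro hone
      exact hx (hinj (by simpa using hone))
    exact hTF (ι x) h1 (ι.isOfFinOrder hfin)
  · -- elementary amenable
    exact ElementaryAmenable.of_mulEquiv _ _
      (QuotientGroup.quotientKerEquivRange φ).symm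
      (ElementaryAmenable.of_subgroup M φ.range hEA)
  · ext k
    simp
end

section
/- Let G be a group, H a finite index normal subgroup of G, and U a normal subgroup of H such that H/U is torsion-free. Let U^G = ⋂_{g ∈ G} gUg⁻¹ be the normal core of U in G. Then H/U^G is torsion-free. -/
universe u

/-- If `H` is a finite index normal subgroup of `G`, `U ≤ H` is normal in `H` with
`H/U` torsion-free, then `H/U^G` is torsion-free, where `U^G` is the normal core. -/
theorem quotient_normalCore_torsionFree (G : Type u) [Group G] (H : Subgroup G)
    [H.Normal] [H.FiniteIndex] (U : Subgroup G) (hUH : U ≤ H)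
    [hU : (U.subgroupOf H).Normal]
    (hTF : Monoid.IsTorsionFree ((H : Type u) ⧸ U.subgroupOf H)) :
    Monoid.IsTorsionFree ((H : Type u) ⧸ U.normalCore.subgroupOf H) := by
  intro x hx hfin
  apply hx
  obtain ⟨⟨h, hh⟩, rfl⟩ := QuotientGroup.mk_surjective x
  obtain ⟨n, hn, hpow⟩ := hfin.exists_pow_eq_one
  rw [← QuotientGroup.mk_pow, QuotientGroup.eq_one_iff] at hpow
  rw [QuotientGroup.eq_one_iff]
  -- hpow : (⟨h, hh⟩ : H)^n ∈ U.normalCore.subgroupOf H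
  have hcore : h ^ n ∈ U.normalCore := hpow
  intro b
  -- show b * h * b⁻¹ ∈ U
  have hbH : b * h * b⁻¹ ∈ H := Subgroup.Normal.conj_mem ‹H.Normal› h hh b
  set k : H := ⟨b * h * b⁻¹, hbH⟩
  have hkn : k ^ n ∈ U.subgroupOf H := by
    show (k : G) ^ n ∈ U
    have : (k : G) ^ n = b * h ^ n * b⁻¹ := by
      simp [k, conj_pow]
    rw [this]
    exact hcore b
  have hfin' : IsOfFinOrder ((QuotientGroup.mk k : (H : Type u) ⧸ U.subgroupOf H)) := by
    refine isOfFinOrder_iff_pow_eq_one.mpr ⟨n, hn, ?_⟩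
    rw [← QuotientGroup.mk_pow, QuotientGroup.eq_one_iff]
    exact hkn
  have : (QuotientGroup.mk k : (H : Type u) ⧸ U.subgroupOf H) = 1 := by
    by_contra hne
    exact hTF _ hne hfin'
  rw [QuotientGroup.eq_one_iff] at this
  exact this
end

section
/- Let H be a finitely generated group with the factorization property. Then there exists a countable descending chain U_1 ≥ U_2 ≥ ... of normal subgroups of H such that each H/U_n is torsion-free elementary amenable and every finite index subgroup of H contains some U_n. -/
universe u

instance finiteMonoidHom (H P : Type*) [Group H] [Group.FG H] [Group P] [Finite P] :
    Finite (H →* P) := by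
  obtain ⟨S, hS⟩ := Group.FG.out (G := H)
  have : Function.Injective (fun f : H →* P => (fun s : S => f s)) := by
    intro f g h
    refine MonoidHom.eq_of_eqOn_dense hS ?_
    intro x hx
    exact congrFun h ⟨x, hx⟩
  exact Finite.of_injective _ this

theorem finite_index_le (H : Type*) [Group H] [Group.FG H] (n : ℕ) :
    {K : Subgroup H | K.index ≤ n ∧ K.index ≠ 0}.Finite := by
  classical
  set S := {K : Subgroup H | K.index ≤ n ∧ K.index ≠ 0}
  have key : ∀ K : S, ∃ (f : H →* Equiv.Perm (Fin n)) (x : Fin n),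
      ∀ g : H, g ∈ (K : Subgroup H) ↔ f g x = x := by
    rintro ⟨K, hKn, hK0⟩
    have : K.FiniteIndex := ⟨hK0⟩
    have hfin : Finite (H ⧸ K) := K.finite_quotient_of_finiteIndex
    have hcard : Nat.card (H ⧸ K) ≤ n := by rwa [← Subgroup.index]
    obtain ⟨e⟩ : Nonempty (H ⧸ K ↪ Fin n) := by
      have := Fintype.ofFinite (H ⧸ K)
      obtain ⟨e'⟩ := Fintype.truncEquivFin (H ⧸ K) |>.nonempty
      exact ⟨e'.toEmbedding.trans (Fin.castLEEmb (by simpa [Nat.card_eq_fintype_card] using hcard))⟩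
    refine ⟨(Equiv.Perm.viaEmbeddingHom e).comp (MulAction.toPermHom H (H ⧸ K)),
      e ((1 : H) : H ⧸ K), fun g => ?_⟩
    simp only [MonoidHom.comp_apply, Equiv.Perm.viaEmbeddingHom_apply]
    rw [Equiv.Perm.viaEmbedding_apply]
    have : (MulAction.toPermHom H (H ⧸ K) g) ((1:H) : H ⧸ K) = ((g : H) : H ⧸ K) := by
      show g • ((1:H) : H ⧸ K) = _
      show ((g * 1 : H) : H ⧸ K) = _
      rw [mul_one]
    rw [this]
    rw [e.injective.eq_iff, QuotientGroup.eq]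
    simp
  choose f x hfx using key
  have hinj : Function.Injective (fun K : S => (f K, x K)) := by
    intro K K' h
    obtain ⟨h1, h2⟩ := Prod.mk.injEq .. ▸ h
    ext g
    rw [hfx K g, hfx K' g, h1, h2]
  rw [← Set.finite_coe_iff]
  exact Finite.of_injective _ hinj


theorem ea_of_injective {A B : Type u} [Group A] [Group B] (f : A →* B)
    (hf : Function.Injective f) (hB : ElementaryAmenable B) : ElementaryAmenable A :=
  ElementaryAmenable.of_mulEquiv _ _ (MonoidHom.ofInjective hf).symm
    (ElementaryAmenable.of_subgroup B f.range hB)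

theorem tf_of_injective {A B : Type*} [Group A] [Group B] (f : A →* B)
    (hf : Function.Injective f) (hB : ∀ g : B, g ≠ 1 → ¬IsOfFinOrder g) : ∀ g : A, g ≠ 1 → ¬IsOfFinOrder g := by
  intro a ha hfin
  refine hB (f a) ?_ (f.isOfFinOrder hfin)
  rw [← map_one f]
  exact hf.ne_iff.mpr ha

theorem tf_pi {n : ℕ} (M : Fin n → Type u) [∀ i, Group (M i)]
    (h : ∀ i, ∀ g : M i, g ≠ 1 → ¬IsOfFinOrder g) : ∀ g : (∀ i, M i), g ≠ 1 → ¬IsOfFinOrder g := by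
  intro x hx hfin
  obtain ⟨i, hi⟩ : ∃ i, x i ≠ 1 := by
    by_contra hc
    push_neg at hc
    exact hx (funext hc)
  exact h i (x i) hi ((Pi.evalMonoidHom M i).isOfFinOrder hfin)

theorem ea_pi : ∀ (n : ℕ) (M : Fin n → Type u) [∀ i, Group (M i)],
    (∀ i, ElementaryAmenable (M i)) → ElementaryAmenable (∀ i, M i) := by
  intro n
  induction n with
  | zero =>
    intro M _ _
    exact ElementaryAmenable.of_finite _ (Finite.of_subsingleton)
  | succ n ih =>
    intro M _ hM
    let p : (∀ i : Fin (n+1), M i) →* (∀ i : Fin n, M i.succ) :=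
      { toFun := fun f i => f i.succ, map_one' := rfl, map_mul' := fun _ _ => rfl }
    have hsurj : Function.Surjective p := by
      intro y
      refine ⟨Fin.cases 1 y, ?_⟩
      funext i
      simp [p]
    have hQ : ElementaryAmenable ((∀ i : Fin (n+1), M i) ⧸ p.ker) :=
      ElementaryAmenable.of_mulEquiv _ _ (QuotientGroup.quotientKerEquivOfSurjective p hsurj).symm
        (ih _ (fun i => hM i.succ))
    have hN : ElementaryAmenable p.ker := by
      refine ea_of_injective ((Pi.evalMonoidHom M 0).comp p.ker.subtype) ?_ (hM 0)
      intro a b hab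
      ext i
      refine Fin.cases ?_ ?_ i
      · exact hab
      · intro j
        have ha : a.1 j.succ = 1 := congrFun (MonoidHom.mem_ker.mp a.2) j
        have hb : b.1 j.succ = 1 := congrFun (MonoidHom.mem_ker.mp b.2) j
        rw [ha, hb]
    exact ElementaryAmenable.of_extension _ p.ker hN hQ

/-- A finitely generated group with the factorization property admits a descending
chain of normal subgroups `U₁ ≥ U₂ ≥ ⋯` with each `H/Uₙ` torsion-free elementary
amenable, such that every finite index subgroup of `H` contains some `Uₙ`. -/
theorem exists_cofinal_chain (H : Type u) [Group H] [Group.FG H]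
    (hH : HasFactorizationProperty H) :
    ∃ U : ℕ → Subgroup H, Antitone U ∧ (∀ n, (U n).Normal) ∧
      (∀ n, ∃ (M : GrpCat.{u}) (π : H →* M), Function.Surjective π ∧ π.ker = U n ∧
        (∀ g : M, g ≠ 1 → ¬IsOfFinOrder g) ∧ ElementaryAmenable M) ∧
      (∀ K : Subgroup H, K.FiniteIndex → ∃ n, U n ≤ K) := by
  classical
  -- Step 1: for every finite-index subgroup L we get a map to a torsion-free EA group
  -- whose kernel is contained in L.
  have step : ∀ L : Subgroup H, L.FiniteIndex → ∃ (M : GrpCat.{u}) (g : H →* M),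
      (∀ g : M, g ≠ 1 → ¬IsOfFinOrder g) ∧ ElementaryAmenable M ∧ g.ker ≤ L := by
    intro L hL
    have hfin : Finite (H ⧸ L.normalCore) := Subgroup.finite_quotient_of_finiteIndex
    obtain ⟨M, g, h, hTF, hEA, hcomp⟩ :=
      hH (GrpCat.of (H ⧸ L.normalCore)) hfin (QuotientGroup.mk' L.normalCore)
    refine ⟨M, g, hTF, hEA, fun a ha => ?_⟩
    have h1 : (QuotientGroup.mk' L.normalCore) a = 1 := by
      rw [← hcomp]
      simp [MonoidHom.mem_ker.mp ha]
    have h2 : a ∈ L.normalCore := by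
      rwa [← QuotientGroup.ker_mk' L.normalCore, MonoidHom.mem_ker]
    exact L.normalCore_le h2
  -- Step 2: the intersection of all subgroups of index ≤ n+1 has finite index.
  let Kn : ℕ → Subgroup H := fun n =>
    ⨅ K : {K : Subgroup H // K.index ≤ n + 1 ∧ K.index ≠ 0}, (K : Subgroup H)
  have hKfin : ∀ n, (Kn n).FiniteIndex := by
    intro n
    have hf : Finite {K : Subgroup H // K.index ≤ n + 1 ∧ K.index ≠ 0} :=
      (finite_index_le H (n + 1)).to_subtype
    exact Subgroup.finiteIndex_iInf fun K => ⟨K.2.2⟩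
  have hKle : ∀ (n : ℕ) (K : Subgroup H), K.index ≤ n + 1 → K.index ≠ 0 → Kn n ≤ K :=
    fun n K h1 h2 => iInf_le _ (⟨K, h1, h2⟩ : {K : Subgroup H // K.index ≤ n + 1 ∧ K.index ≠ 0})
  choose M g hTF hEA hker using fun n => step (Kn n) (hKfin n)
  -- Step 3: combine the first n+1 maps.
  let φ : ∀ n : ℕ, H →* ∀ i : Fin (n + 1), (M i.1 : Type u) := fun n =>
    { toFun := fun a i => g i.1 a
      map_one' := by funext i; simp
      map_mul' := by intro a b; funext i; simp }
  refine ⟨fun n => (φ n).ker, ?_, fun n => inferInstance, ?_, ?_⟩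
  · refine antitone_nat_of_succ_le fun n a ha => ?_
    have h2 : ∀ i : Fin (n + 2), g i.1 a = 1 := fun i => congrFun (MonoidHom.mem_ker.mp ha) i
    refine MonoidHom.mem_ker.mpr (funext fun i => ?_)
    exact h2 ⟨i.1, Nat.lt_succ_of_lt i.2⟩
  · intro n
    have hpiTF : ∀ x : (∀ i : Fin (n + 1), (M i.1 : Type u)), x ≠ 1 → ¬IsOfFinOrder x :=
      tf_pi _ fun i => hTF i.1
    have hpiEA : ElementaryAmenable (∀ i : Fin (n + 1), (M i.1 : Type u)) :=
      ea_pi _ _ fun i => hEA i.1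
    refine ⟨GrpCat.of (φ n).range, (φ n).rangeRestrict, (φ n).rangeRestrict_surjective,
      (φ n).ker_rangeRestrict, ?_, ?_⟩
    · exact tf_of_injective (φ n).range.subtype (Subgroup.subtype_injective _) hpiTF
    · exact ElementaryAmenable.of_subgroup _ (φ n).range hpiEA
  · intro K hK
    refine ⟨K.index, ?_⟩
    have h1 : (φ K.index).ker ≤ (g K.index).ker := by
      intro a ha
      exact congrFun (MonoidHom.mem_ker.mp ha) ⟨K.index, Nat.lt_succ_self _⟩
    exact h1.trans ((hker K.index).trans (hKle K.index K (Nat.le_succ _) hK.1))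
end
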